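/- Let p be a prime, F a field of characteristic p, and D a finite abelian p-group of order p^d and exponent p^e (with d ≥ 1). Then the Loewy length of the group algebra F[D] satisfies LL(F[D]) ≤ ρ_p(d, e). -/

import Mathlib

/-- The Loewy length of a ring: the smallest positive `L` such that the `L`-th power of the
Jacobson radical is zero. -/
noncomputable def loewyLength (A : Type*) [Ring A] : ℕ :=
  sInf {L : ℕ | 0 < L ∧ ((⊥ : Ideal A).jacobson) ^ L = ⊥}

/-- `ρ_p(m,n)`: if `n ≠ 0`, write `m = q·n + r` and set `ρ = q·(p^n − 1) + p^r`; if `n = 0`, set `ρ = 1`. -/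
def rho (p m n : ℕ) : ℕ := if n = 0 then 1 else m / n * (p ^ n - 1) + p ^ (m % n)

lemma aux_mul (x y : ℕ) (hx : 1 ≤ x) (hy : 1 ≤ y) : x + y ≤ x * y + 1 := by
  obtain ⟨a, rfl⟩ := Nat.exists_eq_add_of_le hx
  obtain ⟨b, rfl⟩ := Nat.exists_eq_add_of_le hy
  nlinarith

lemma rho_add (p e : ℕ) (hp : 2 ≤ p) (he : e ≠ 0) (s a : ℕ) (ha : a ≤ e) :
    rho p s e + p ^ a ≤ rho p (s + a) e + 1 := by
  have hppos : ∀ k : ℕ, 1 ≤ p ^ k := fun k => Nat.one_le_pow _ _ (by omega)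
  have hepos : 0 < e := Nat.pos_of_ne_zero he
  simp only [rho, if_neg he]
  have hdm := Nat.div_add_mod s e
  set q := s / e with hq
  set r := s % e with hr
  have hrlt : r < e := Nat.mod_lt _ hepos
  by_cases hcase : r + a < e
  · have hsplit : s + a = (r + a) + q * e := by rw [← hdm]; ring
    have h1 : (s + a) / e = q := by
      rw [hsplit, Nat.add_mul_div_right _ _ hepos, Nat.div_eq_of_lt hcase, Nat.zero_add]
    have h2 : (s + a) % e = r + a := by
      rw [hsplit, Nat.add_mul_mod_self_right, Nat.mod_eq_of_lt hcase]
    rw [h1, h2]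
    have hm := aux_mul (p ^ r) (p ^ a) (hppos r) (hppos a)
    rw [← pow_add] at hm
    have h3 := hppos (r + a)
    generalize q * (p ^ e - 1) = X
    omega
  · set t := r + a - e with htdef
    have hsplit : s + a = t + (q + 1) * e := by
      have h5 : r + a = e + (r + a - e) := by omega
      have h6 : s + a = (r + a - e) + (q + 1) * e := by
        have h7 : e * q + r = s := hdm
        nlinarith [h5]
      rw [← htdef] at h6; exact h6
    have h1 : (s + a) / e = q + 1 := by
      rw [hsplit, Nat.add_mul_div_right _ _ hepos, Nat.div_eq_of_lt (by omega), Nat.zero_add]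
    have h2 : (s + a) % e = t := by
      rw [hsplit, Nat.add_mul_mod_self_right, Nat.mod_eq_of_lt (by omega)]
    rw [h1, h2]
    have hta : t ≤ a := by omega
    have htr : t ≤ r := by omega
    obtain ⟨a', ha'⟩ := Nat.exists_eq_add_of_le hta
    obtain ⟨r', hr'⟩ := Nat.exists_eq_add_of_le htr
    have hkey : p ^ a + p ^ r ≤ p ^ e + p ^ t := by
      have he' : e = t + (a' + r') := by omega
      have hm := aux_mul (p ^ a') (p ^ r') (hppos a') (hppos r')
      calc p ^ a + p ^ r = p ^ t * (p ^ a' + p ^ r') := by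
            rw [ha', hr', pow_add, pow_add]; ring
        _ ≤ p ^ t * (p ^ a' * p ^ r' + 1) := Nat.mul_le_mul_left _ hm
        _ = p ^ e + p ^ t := by rw [he', pow_add, pow_add]; ring
    have hpe := hppos e
    rw [add_mul, one_mul]
    generalize q * (p ^ e - 1) = X
    omega

lemma sum_le_rho {ι : Type*} [DecidableEq ι] (p e : ℕ) (hp : 2 ≤ p) (he : e ≠ 0)
    (s : Finset ι) (f : ι → ℕ) (hf : ∀ i ∈ s, f i ≤ e) :
    1 + ∑ i ∈ s, (p ^ f i - 1) ≤ rho p (∑ i ∈ s, f i) e := by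
  classical
  induction s using Finset.induction_on with
  | empty => simp [rho, if_neg he, Nat.zero_div, Nat.zero_mod]
  | insert a s' hnotmem ih =>
    rw [Finset.sum_insert hnotmem, Finset.sum_insert hnotmem]
    have h1 := ih (fun i hi => hf i (Finset.mem_insert_of_mem hi))
    have h2 := rho_add p e hp he (∑ i ∈ s', f i) (f a) (hf a (Finset.mem_insert_self a s'))
    have h3 : 1 ≤ p ^ f a := Nat.one_le_pow _ _ (by omega)
    rw [add_comm (f a)]
    omega

lemma sup_pow_succ_le {R : Type*} [CommSemiring R] (I J : Ideal R) (n m : ℕ) :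
    (I ⊔ J) ^ (n + m + 1) ≤ I ^ (n + 1) ⊔ J ^ (m + 1) := by
  rw [← Ideal.add_eq_sup, ← Ideal.add_eq_sup, add_pow, Ideal.sum_eq_sup]
  apply Finset.sup_le
  intro i hi
  by_cases hn : n + 1 ≤ i
  · exact Ideal.mul_le_left.trans (Ideal.mul_le_left.trans
      ((Ideal.pow_le_pow_right hn).trans le_sup_left))
  · refine Ideal.mul_le_left.trans (Ideal.mul_le_right.trans
      ((Ideal.pow_le_pow_right ?_).trans le_sup_right))
    simp only [Finset.mem_range] at hi
    omega

lemma span_pow_eq_bot {R : Type*} [CommRing R] {ι : Type*} [DecidableEq ι] (s : Finset ι)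
    (x : ι → R) (m : ι → ℕ) (h : ∀ i ∈ s, x i ^ (m i + 1) = 0) :
    Ideal.span (x '' s) ^ (1 + ∑ i ∈ s, m i) = ⊥ := by
  classical
  induction s using Finset.induction_on with
  | empty => simp
  | insert a s' hnotmem ih =>
    rw [Finset.sum_insert hnotmem, Finset.coe_insert, Set.image_insert_eq, Ideal.span_insert]
    have hle : (Ideal.span {x a} ⊔ Ideal.span (x '' s')) ^ (m a + (∑ i ∈ s', m i) + 1)
        ≤ Ideal.span {x a} ^ (m a + 1) ⊔ Ideal.span (x '' s') ^ ((∑ i ∈ s', m i) + 1) :=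
      sup_pow_succ_le _ _ _ _
    rw [Ideal.span_singleton_pow, h a (Finset.mem_insert_self a s'),
      Ideal.span_singleton_eq_bot.mpr rfl, add_comm (∑ i ∈ s', m i) 1,
      ih (fun i hi => h i (Finset.mem_insert_of_mem hi))] at hle
    rw [show 1 + (m a + ∑ i ∈ s', m i) = m a + (∑ i ∈ s', m i) + 1 by ring]
    simpa using hle

theorem loewyLength_groupAlgebra_le_rho (p : ℕ) (hp : p.Prime)
    (F : Type*) [Field F] [CharP F p] (D : Type*) [CommGroup D] [Fintype D]
    (d e : ℕ) (hd : 1 ≤ d) (hcard : Fintype.card D = p ^ d)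
    (hexp : Monoid.exponent D = p ^ e) :
    loewyLength (MonoidAlgebra F D) ≤ rho p d e := by
  classical
  haveI : Fact p.Prime := ⟨hp⟩
  have hp2 : 2 ≤ p := hp.two_le
  -- e ≠ 0
  have he : e ≠ 0 := by
    rintro rfl
    rw [pow_zero] at hexp
    have hall : ∀ y : D, y = 1 := fun y => by
      have := Monoid.pow_exponent_eq_one y
      rwa [hexp, pow_one] at this
    have : Fintype.card D = 1 := Fintype.card_eq_one_iff.mpr ⟨1, fun y => hall y⟩
    rw [hcard] at this
    have : p ≤ p ^ d := Nat.le_self_pow (by omega) p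
    omega
  -- structure theorem
  obtain ⟨ι, hι, n, hn, ⟨φ⟩⟩ := CommGroup.equiv_prod_multiplicative_zmod_of_finite D
  haveI : ∀ i, NeZero (n i) := fun i => ⟨by have := hn i; omega⟩
  haveI : DecidableEq ι := Classical.decEq ι
  -- card computation
  have hcard' : ∏ i, n i = p ^ d := by
    rw [← hcard, Fintype.card_congr φ.toEquiv, Fintype.card_pi]
    congr 1
    ext i
    rw [Fintype.card_multiplicative, ZMod.card]
  -- each n i is a power of p
  have hdvd : ∀ i, n i ∣ p ^ d := fun i => hcard' ▸ Finset.dvd_prod_of_mem n (Finset.mem_univ i)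
  have hex : ∀ i, ∃ f ≤ d, n i = p ^ f := fun i => (Nat.dvd_prime_pow hp).1 (hdvd i)
  choose f hfd hf using hex
  -- sum of f is d
  have hsum : ∑ i, f i = d := by
    have h9 : ∏ i, n i = p ^ (∑ i, f i) := by
      rw [Finset.prod_congr rfl fun i _ => hf i, Finset.prod_pow_eq_pow_sum]
    exact Nat.pow_right_injective hp2 (h9.symm.trans hcard')
  -- generators
  set g : ι → D := fun i => φ.symm (Pi.mulSingle i (Multiplicative.ofAdd 1)) with hg
  have horder : ∀ i, orderOf (g i) = n i := by
    intro i
    rw [hg, MulEquiv.orderOf_eq, orderOf_piMulSingle, orderOf_ofAdd_eq_addOrderOf,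
      ZMod.addOrderOf_one]
  -- f i ≤ e
  have hfe : ∀ i, f i ≤ e := by
    intro i
    have h1 : (g i) ^ p ^ e = 1 := hexp ▸ Monoid.pow_exponent_eq_one (g i)
    have h2 : n i ∣ p ^ e := (horder i) ▸ orderOf_dvd_of_pow_eq_one h1
    rw [hf i] at h2
    exact (pow_dvd_pow_iff hp.ne_zero hp.prime.not_unit).mp h2
  -- group elements as products of generators
  have hgen : ∀ x : D, x = ∏ i, (g i) ^ (φ x i).toAdd.val := by
    intro x
    apply φ.injective
    rw [map_prod]
    have h1 : ∀ i, φ ((g i) ^ (φ x i).toAdd.val) = Pi.mulSingle i (φ x i) := by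
      intro i
      rw [hg, map_pow, MulEquiv.apply_symm_apply, ← Pi.mulSingle_pow]
      rw [← ofAdd_nsmul, nsmul_eq_mul, mul_one]
      simp [ZMod.natCast_val, ZMod.cast_id]
    rw [Finset.prod_congr rfl (fun i _ => h1 i), Finset.univ_prod_mulSingle]
  -- the algebra
  set A := MonoidAlgebra F D with hA
  haveI : CharP A p := charP_of_injective_algebraMap (algebraMap F A).injective p
  set x : ι → A := fun i => MonoidAlgebra.of F D (g i) - 1 with hx
  set S : Ideal A := Ideal.span (x '' (↑(Finset.univ : Finset ι) : Set ι)) with hS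
  -- nilpotency of generators
  have hnil : ∀ i ∈ Finset.univ, x i ^ ((p ^ f i - 1) + 1) = 0 := by
    intro i _
    have hp1 : 1 ≤ p ^ f i := Nat.one_le_pow _ _ (by omega)
    rw [show (p ^ f i - 1) + 1 = p ^ f i by omega, hx]
    rw [sub_pow_char_pow (R := A)]
    rw [← map_pow, one_pow]
    have : (g i) ^ p ^ f i = 1 := by
      rw [← hf i, ← horder i]; exact pow_orderOf_eq_one (g i)
    rw [this, map_one, sub_self]
  -- power of S is zero
  have hSpow : S ^ (1 + ∑ i, (p ^ f i - 1)) = ⊥ := span_pow_eq_bot Finset.univ x _ hnil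
  -- arithmetic bound
  have hbound : 1 + ∑ i, (p ^ f i - 1) ≤ rho p d e := by
    have := sum_le_rho p e hp2 he Finset.univ f (fun i _ => hfe i)
    rwa [hsum] at this
  -- every of g - 1 is in S
  have hkey : ∀ h : D, MonoidAlgebra.of F D h - 1 ∈ S := by
    have hone : MonoidAlgebra.of F D 1 - 1 ∈ S := by
      rw [map_one, sub_self]; exact S.zero_mem
    have hmul : ∀ a b : D, MonoidAlgebra.of F D a - 1 ∈ S → MonoidAlgebra.of F D b - 1 ∈ S →
        MonoidAlgebra.of F D (a * b) - 1 ∈ S := by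
      intro a b hasub hbsub
      have : MonoidAlgebra.of F D (a * b) - 1
          = MonoidAlgebra.of F D a * (MonoidAlgebra.of F D b - 1) + (MonoidAlgebra.of F D a - 1) := by
        rw [map_mul]; ring
      rw [this]
      exact S.add_mem (Ideal.mul_mem_left _ _ hbsub) hasub
    have hpow : ∀ (a : D) (k : ℕ), MonoidAlgebra.of F D a - 1 ∈ S →
        MonoidAlgebra.of F D (a ^ k) - 1 ∈ S := by
      intro a k ha
      induction k with
      | zero => simpa using hone
      | succ k ih => rw [pow_succ]; exact hmul _ _ ih ha
    have hgenmem : ∀ i, MonoidAlgebra.of F D (g i) - 1 ∈ S := by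
      intro i
      apply Ideal.subset_span
      exact ⟨i, Finset.mem_coe.mpr (Finset.mem_univ i), rfl⟩
    intro h
    rw [hgen h]
    -- product over univ
    have : ∀ (t : Finset ι), MonoidAlgebra.of F D (∏ i ∈ t, (g i) ^ (φ h i).toAdd.val) - 1 ∈ S := by
      intro t
      induction t using Finset.induction_on with
      | empty => simpa using hone
      | insert a s' hnotmem ih =>
        rw [Finset.prod_insert hnotmem]
        exact hmul _ _ (hpow _ _ (hgenmem a)) ih
    exact this Finset.univ
  -- augmentation map
  set ε : A →ₐ[F] F := MonoidAlgebra.lift F F D 1 with hε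
  have hεsurj : Function.Surjective ε := fun c => ⟨algebraMap F A c, by simp [hε]⟩
  have hmax : (RingHom.ker ε).IsMaximal := RingHom.ker_isMaximal_of_surjective ε hεsurj
  -- kernel of augmentation is contained in S
  have hker : RingHom.ker ε ≤ S := by
    intro a ha
    rw [RingHom.mem_ker] at ha
    have hεa : ∑ q ∈ a.coeff.support, a.coeff q = 0 := by
      have : ε a = ∑ q ∈ a.coeff.support, a.coeff q := by
        rw [hε, MonoidAlgebra.lift_apply]
        simp [Finsupp.sum]
      rw [← this, ha]
    have hrepr : a = ∑ q ∈ a.coeff.support, (a.coeff q) • (MonoidAlgebra.of F D q - 1) := by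
      simp only [smul_sub]
      rw [Finset.sum_sub_distrib]
      have h1 : ∑ q ∈ a.coeff.support, (a.coeff q) • MonoidAlgebra.of F D q = a := by
        conv_rhs => rw [← MonoidAlgebra.sum_coeff_single a]
        rw [Finsupp.sum]
        refine Finset.sum_congr rfl fun q _ => ?_
        rw [MonoidAlgebra.of_apply, MonoidAlgebra.smul_single', mul_one]
      have h2 : ∑ q ∈ a.coeff.support, (a.coeff q) • (1 : A) = 0 := by
        rw [← Finset.sum_smul, hεa, zero_smul]
      rw [h1, h2, sub_zero]
    rw [hrepr]
    refine Submodule.sum_mem S fun q _ => ?_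
    rw [Algebra.smul_def]
    exact Ideal.mul_mem_left _ _ (hkey q)
  -- jacobson radical is contained in ker
  have hjac : (⊥ : Ideal A).jacobson ≤ RingHom.ker ε := sInf_le ⟨bot_le, hmax⟩
  -- conclude
  have hrhopos : 0 < rho p d e := by omega
  apply Nat.sInf_le
  refine ⟨hrhopos, ?_⟩
  have hle : (⊥ : Ideal A).jacobson ^ rho p d e ≤ ⊥ := by
    calc (⊥ : Ideal A).jacobson ^ rho p d e ≤ S ^ rho p d e :=
          Ideal.pow_right_mono (hjac.trans hker) _
      _ ≤ S ^ (1 + ∑ i, (p ^ f i - 1)) := Ideal.pow_le_pow_right hbound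
      _ = ⊥ := hSpow
  exact le_bot_iff.mp hle
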